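/- Let C be a category and W a class of morphisms of C. Then: (i) on the objects of Fun^W(ℕ,C), the assignment Hom(C,D) := { pairs (k,φ) with k ∈ ℕ and φ : C → T^{k,*}D in Fun^W(ℕ,C) } / ∼, where ∼ is generated by (k,φ) ∼ (k+1, v_{T^{k,*}D} ∘ φ), together with the composition [k,φ] ∘ [k',φ'] := [k + k', T^{k',*}(φ) ∘ φ'], is well defined (independent of representatives), associative and unital, yielding a category Fun^W_shift(ℕ,C); (ii) the functor ℓ_V : Fun^W(ℕ,C) → Fun^W_shift(ℕ,C), which is the identity on objects and sends φ to [0,φ], inverts every morphism in V := { v_C : C ∈ Fun^W(ℕ,C) } and exhibits Fun^W_shift(ℕ,C) as the localization of Fun^W(ℕ,C) at V (in ordinary category theory). -/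

import Mathlib

/-!
Statement 3: the shift category `Fun^W_shift(ℕ,C)`.

Objects are the objects of `Fun^W(ℕ,C)`; morphisms `X → Y` are equivalence classes `[k,φ]` of
pairs `(k, φ : X ⟶ T^{k,*}Y)` under the relation generated by `(k,φ) ∼ (k+1, v_{T^{k,*}Y} ∘ φ)`.
The theorem asserts:
(i) the composition `[k,φ] ∘ [k',φ'] = [k+k', T^{k',*}(φ)∘φ']` is well defined,
    associative and unital;
(ii) the identity-on-objects functor `ℓ_V : φ ↦ [0,φ]` inverts every morphism of
     `V = { v_C }` and exhibits the shift category as the localization of `Fun^W(ℕ,C)` at `V`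
     (expressed by the 1-categorical universal property of the localization).
-/

open CategoryTheory

universe v u v₂ u₂

namespace ShiftCat

variable {C : Type u} [Category.{v} C] {W : MorphismProperty C}

abbrev WSeq (W : MorphismProperty C) :=
  ObjectProperty.FullSubcategory (fun F : ℕ ⥤ C => ∀ n : ℕ, W (F.map (homOfLE (Nat.le_succ n))))

lemma natHom_eq {a b : ℕ} (f g : a ⟶ b) : f = g := Subsingleton.elim f g

def shObj (k : ℕ) (F : WSeq W) : WSeq W where
  obj :=
    { obj := fun n => F.obj.obj (n + k)
      map := fun {a b} f => F.obj.map (homOfLE (Nat.add_le_add_right (leOfHom f) k))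
      map_id := fun n =>
        (congrArg F.obj.map (natHom_eq _ (𝟙 (n + k)))).trans (F.obj.map_id _)
      map_comp := fun {a b c} f g =>
        (congrArg F.obj.map (natHom_eq _ (homOfLE (Nat.add_le_add_right (leOfHom f) k) ≫
          homOfLE (Nat.add_le_add_right (leOfHom g) k)))).trans (F.obj.map_comp _ _) }
  property := fun n => by
    have h : ∀ {x y : ℕ} (p : x ≤ y), y = x + 1 → W (F.obj.map (homOfLE p)) := by
      intro x y p hy; subst hy; exact F.property x
    exact h _ (by omega)

def vpow (k : ℕ) (F : WSeq W) : F ⟶ shObj k F where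
  hom :=
    { app n := F.obj.map (homOfLE (Nat.le_add_right n k))
      naturality a b f := by
        show F.obj.map _ ≫ F.obj.map _ = F.obj.map _ ≫ F.obj.map _
        rw [← F.obj.map_comp, ← F.obj.map_comp]
        exact congrArg F.obj.map (natHom_eq _ _) }

/-- The canonical morphism `v_{T^{k,*}D} : T^{k,*}D ⟶ T^{k+1,*}D`. -/
def vstep (k : ℕ) (F : WSeq W) : shObj k F ⟶ shObj (k + 1) F where
  hom :=
    { app n := F.obj.map (homOfLE (by omega : n + k ≤ n + (k + 1)))
      naturality a b f := by
        show F.obj.map _ ≫ F.obj.map _ = F.obj.map _ ≫ F.obj.map _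
        rw [← F.obj.map_comp, ← F.obj.map_comp]
        exact congrArg F.obj.map (natHom_eq _ _) }

def Pre (X Y : WSeq W) := Σ k : ℕ, (X ⟶ shObj k Y)

def stepRel (X Y : WSeq W) : Pre X Y → Pre X Y → Prop :=
  fun a b => b = ⟨a.1 + 1, a.2 ≫ vstep a.1 Y⟩

def SH (X Y : WSeq W) := Quot (stepRel X Y)

def lmk {X Y : WSeq W} (φ : X ⟶ Y) : SH X Y := Quot.mk _ ⟨0, φ⟩

lemma squash (Fc : ℕ ⥤ C) {x x' y y' : ℕ} (hx : x = x') (hy : y = y') (p : x ≤ y) (q : x' ≤ y') :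
    Fc.map (homOfLE p) ≫ eqToHom (congrArg Fc.obj hy) =
      eqToHom (congrArg Fc.obj hx) ≫ Fc.map (homOfLE q) := by
  subst hx; subst hy
  rw [eqToHom_refl, eqToHom_refl, Category.comp_id, Category.id_comp]

/-- `T^{m,*}(ψ)` followed by the canonical identification `T^{m,*}T^{k,*} = T^{(k+m),*}`. -/
def shMap (m : ℕ) {Y Z : WSeq W} {k : ℕ} (ψ : Y ⟶ shObj k Z) :
    shObj m Y ⟶ shObj (k + m) Z where
  hom :=
    { app n := ψ.hom.app (n + m) ≫ eqToHom (congrArg Z.obj.obj (by omega : (n + m) + k = n + (k + m)))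
      naturality a b f := by
        show Y.obj.map (homOfLE _) ≫ ψ.hom.app (b + m) ≫ eqToHom _ =
          (ψ.hom.app (a + m) ≫ eqToHom _) ≫ Z.obj.map (homOfLE _)
        rw [← Category.assoc, ψ.hom.naturality (homOfLE (Nat.add_le_add_right (leOfHom f) m))]
        show (ψ.hom.app (a + m) ≫ Z.obj.map (homOfLE _)) ≫ _ = _
        rw [Category.assoc]
        refine (Category.assoc _ _ _).trans (congrArg _ ?_)
        exact squash Z.obj (by omega) (by omega) _ _ }

/-- Composition on representatives: `[k,φ] ∘ [k',φ'] = [k+k', T^{k',*}(φ) ∘ φ']`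
(written diagrammatically: `a = (k',φ') : X → Y` followed by `b = (k,φ) : Y → Z`). -/
def preComp {X Y Z : WSeq W} (a : Pre X Y) (b : Pre Y Z) : Pre X Z :=
  ⟨b.1 + a.1, a.2 ≫ shMap a.1 b.2⟩

end ShiftCat

namespace ShiftCat

open ShiftCat

variable {C : Type u} [Category.{v} C] {W : MorphismProperty C}

attribute [reducible] shObj

lemma comp_app {X Y Z : WSeq W} (f : X ⟶ Y) (g : Y ⟶ Z) (n : ℕ) :
    (f ≫ g).hom.app n = f.hom.app n ≫ g.hom.app n := rfl

lemma id_app (X : WSeq W) (n : ℕ) : NatTrans.app (InducedCategory.Hom.hom (𝟙 X)) n = 𝟙 (X.obj.obj n) := rfl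

lemma hom_ext {X Y : WSeq W} {f g : X ⟶ Y} (h : ∀ n, f.hom.app n = g.hom.app n) : f = g :=
  ObjectProperty.hom_ext _ (NatTrans.ext (funext h))

lemma shObj_map (k : ℕ) (F : WSeq W) {a b : ℕ} (f : a ⟶ b) :
    (shObj k F).obj.map f = F.obj.map (homOfLE (Nat.add_le_add_right (leOfHom f) k)) := rfl

lemma shMap_app (m : ℕ) {Y Z : WSeq W} {k : ℕ} (ψ : Y ⟶ shObj k Z) (n : ℕ) :
    (shMap m ψ).hom.app n =
      ψ.hom.app (n + m) ≫ eqToHom (congrArg Z.obj.obj (by omega : (n + m) + k = n + (k + m))) := rfl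

lemma vstep_app (k : ℕ) (F : WSeq W) (n : ℕ) :
    (vstep k F).hom.app n = F.obj.map (homOfLE (by omega : n + k ≤ n + (k + 1))) := rfl

lemma vpow_app (k : ℕ) (F : WSeq W) (n : ℕ) :
    (vpow k F).hom.app n = F.obj.map (homOfLE (Nat.le_add_right n k)) := rfl

lemma eqToHom_objC (Fc : ℕ ⥤ C) {a b : ℕ} (h : a = b) {h' : Fc.obj a = Fc.obj b} :
    eqToHom h' = Fc.map (eqToHom h) := by subst h; simp

lemma app_eqToHom {F G : ℕ ⥤ C} (ψ : F ⟶ G) {a b : ℕ} (h : a = b)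
    {h1 : F.obj a = F.obj b} {h2 : G.obj a = G.obj b} :
    eqToHom h1 ≫ ψ.app b = ψ.app a ≫ eqToHom h2 := by subst h; simp

lemma comp_map_eq {X : C} (Fc : ℕ ⥤ C) {a b : ℕ} (f g : a ⟶ b) {α : X ⟶ Fc.obj a} :
    α ≫ Fc.map f = α ≫ Fc.map g := by rw [natHom_eq f g]

def vadd (j m : ℕ) (F : WSeq W) : shObj j F ⟶ shObj (j + m) F where
  hom :=
    { app n := F.obj.map (homOfLE (by omega : n + j ≤ n + (j + m)))
      naturality a b f := by
        show F.obj.map _ ≫ F.obj.map _ = F.obj.map _ ≫ F.obj.map _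
        rw [← F.obj.map_comp, ← F.obj.map_comp]
        exact congrArg F.obj.map (natHom_eq _ _) }

lemma vadd_app (j m : ℕ) (F : WSeq W) (n : ℕ) :
    (vadd j m F).hom.app n = F.obj.map (homOfLE (by omega : n + j ≤ n + (j + m))) := rfl

lemma mk_cast {X Y : WSeq W} {m m' : ℕ} (h : m = m') (φ : X ⟶ shObj m Y) :
    Quot.mk (stepRel X Y) ⟨m, φ⟩ =
      Quot.mk (stepRel X Y) ⟨m', φ ≫ eqToHom (congrArg (shObj · Y) h)⟩ := by
  subst h; simp

lemma vadd_vstep (j m : ℕ) (F : WSeq W) :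
    vadd j m F ≫ vstep (j + m) F = vadd j (m + 1) F := by
  apply hom_ext; intro n
  rw [comp_app, vadd_app, vadd_app, vstep_app, ← F.obj.map_comp]
  exact congrArg F.obj.map (natHom_eq _ _)

lemma mk_vadd {X Z : WSeq W} (j m : ℕ) (ψ : X ⟶ shObj j Z) :
    Quot.mk (stepRel X Z) ⟨j, ψ⟩ = Quot.mk (stepRel X Z) ⟨j + m, ψ ≫ vadd j m Z⟩ := by
  induction m with
  | zero =>
      refine congrArg (Quot.mk _) (congrArg (Sigma.mk j) (hom_ext fun n => ?_)).symm
      rw [comp_app, vadd_app]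
      refine (comp_map_eq Z.obj _ (𝟙 (n + j))).trans ?_
      rw [Z.obj.map_id, Category.comp_id]
  | succ m ih =>
      refine ih.trans ((Quot.sound (r := stepRel X Z) rfl).trans ?_)
      exact congrArg (Quot.mk _) (congrArg (Sigma.mk (j + (m + 1)))
        ((Category.assoc _ _ _).trans (congrArg (fun t => ψ ≫ t) (vadd_vstep j m Z))))

lemma eqToHom_app_W {A B : WSeq W} (h : A = B) (n : ℕ) :
    (eqToHom h).hom.app n = eqToHom (congrArg (fun T : WSeq W => T.obj.obj n) h) := by
  subst h; rfl

lemma comp_comp_map_eq {X X' : C} (Fc : ℕ ⥤ C) {a b : ℕ} (f g : a ⟶ b) {α : X ⟶ X'}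
    {β : X' ⟶ Fc.obj a} : α ≫ β ≫ Fc.map f = α ≫ β ≫ Fc.map g := by rw [natHom_eq f g]

lemma vpow_vadd (j m : ℕ) (F : WSeq W) : vpow j F ≫ vadd j m F = vpow (j + m) F := by
  apply hom_ext; intro n
  rw [comp_app, vpow_app, vadd_app, vpow_app, ← F.obj.map_comp]
  exact congrArg F.obj.map (natHom_eq _ _)

lemma square_lemma {Y Z : WSeq W} {k : ℕ} (φ : Y ⟶ shObj k Z) (m : ℕ) :
    φ ≫ vadd k m Z = vpow m Y ≫ shMap m φ := by
  apply hom_ext; intro n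
  rw [comp_app, comp_app, vadd_app, vpow_app, shMap_app]
  rw [← Category.assoc, φ.hom.naturality (homOfLE (Nat.le_add_right n m)), Category.assoc]
  congr 1
  rw [shObj_map, eqToHom_objC Z.obj (by omega : (n + m) + k = n + (k + m)), ← Z.obj.map_comp]
  exact congrArg Z.obj.map (natHom_eq _ _)

lemma wd_right {X Y Z : WSeq W} (a : Pre X Y) (b b' : Pre Y Z) (h : stepRel Y Z b b') :
    Quot.mk (stepRel X Z) (preComp a b) = Quot.mk (stepRel X Z) (preComp a b') := by
  obtain ⟨k', φ'⟩ := a; obtain ⟨k, φ⟩ := b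
  rw [show b' = _ from h]
  refine (Quot.sound (r := stepRel X Z) rfl).trans ?_
  refine Eq.trans ?_ (mk_cast (by omega : (k + 1) + k' = (k + k') + 1) _).symm
  refine congrArg (Quot.mk _) (congrArg (Sigma.mk ((k + k') + 1)) (hom_ext fun n => ?_))
  simp only [preComp, comp_app, shMap_app, vstep_app, eqToHom_app_W, Category.assoc]
  rw [eqToHom_objC Z.obj (show (n + k') + k = n + (k + k') by omega),
      eqToHom_objC Z.obj (show (n + k') + (k + 1) = n + ((k + 1) + k') by omega),
      eqToHom_objC Z.obj (show n + ((k + 1) + k') = n + ((k + k') + 1) by omega)]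
  simp only [← Functor.map_comp, Category.assoc]
  exact comp_comp_map_eq Z.obj _ _

lemma app_nat {F G : ℕ ⥤ C} (ψ : F ⟶ G) {a b : ℕ} (h : a = b) :
    eqToHom (congrArg F.obj h) ≫ ψ.app b = ψ.app a ≫ eqToHom (congrArg G.obj h) := by
  subst h; simp

lemma app_nat_assoc {F G : ℕ ⥤ C} (ψ : F ⟶ G) {a b : ℕ} (h : a = b) {X : C}
    (g : G.obj b ⟶ X) :
    eqToHom (congrArg F.obj h) ≫ ψ.app b ≫ g = ψ.app a ≫ eqToHom (congrArg G.obj h) ≫ g := by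
  subst h; simp

lemma wd_left {X Y Z : WSeq W} (a a' : Pre X Y) (b : Pre Y Z) (h : stepRel X Y a a') :
    Quot.mk (stepRel X Z) (preComp a b) = Quot.mk (stepRel X Z) (preComp a' b) := by
  obtain ⟨k', φ'⟩ := a; obtain ⟨k, φ⟩ := b
  rw [show a' = _ from h]
  refine (Quot.sound (r := stepRel X Z) rfl).trans ?_
  refine congrArg (Quot.mk _) (congrArg (Sigma.mk ((k + k') + 1)) (hom_ext fun n => ?_))
  simp only [preComp, comp_app, shMap_app, vstep_app, Category.assoc]
  rw [NatTrans.naturality_assoc φ.hom (homOfLE (show n + k' ≤ n + (k' + 1) by omega))]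
  rw [shObj_map,
      eqToHom_objC Z.obj (show (n + k') + k = n + (k + k') by omega),
      eqToHom_objC Z.obj (show (n + (k' + 1)) + k = n + (k + (k' + 1)) by omega)]
  simp only [← Functor.map_comp, Category.assoc]
  exact comp_comp_map_eq Z.obj _ _

def compSH {X Y Z : WSeq W} (f : SH X Y) (g : SH Y Z) : SH X Z :=
  Quot.lift₂ (fun a b => Quot.mk _ (preComp a b))
    (fun a b b' h => wd_right a b b' h) (fun a a' b h => wd_left a a' b h) f g

lemma assoc_pre {X Y Z T : WSeq W} (a : Pre X Y) (b : Pre Y Z) (c : Pre Z T) :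
    Quot.mk (stepRel X T) (preComp (preComp a b) c) =
      Quot.mk (stepRel X T) (preComp a (preComp b c)) := by
  obtain ⟨k1, φ1⟩ := a; obtain ⟨k2, φ2⟩ := b; obtain ⟨k3, φ3⟩ := c
  refine (mk_cast (show k3 + (k2 + k1) = (k3 + k2) + k1 by omega) _).trans ?_
  refine congrArg (Quot.mk _) (congrArg (Sigma.mk ((k3 + k2) + k1)) (hom_ext fun n => ?_))
  simp only [preComp, comp_app, shMap_app, eqToHom_app_W, Category.assoc]
  rw [app_nat_assoc φ3.hom (show (n + k1) + k2 = n + (k2 + k1) by omega)]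
  simp only [eqToHom_trans]

lemma unit_left {X Y : WSeq W} (b : Pre X Y) :
    Quot.mk (stepRel X Y) (preComp ⟨0, 𝟙 X⟩ b) = Quot.mk (stepRel X Y) b := by
  obtain ⟨k, φ⟩ := b
  refine congrArg (Quot.mk _) (congrArg (Sigma.mk k) (hom_ext fun n => ?_))
  simp only [preComp, comp_app, shMap_app, id_app, Category.id_comp]
  erw [comp_app, id_app, Category.id_comp, shMap_app, eqToHom_refl, Category.comp_id]
  rfl

lemma unit_right {X Y : WSeq W} (a : Pre X Y) :
    Quot.mk (stepRel X Y) (preComp a ⟨0, 𝟙 Y⟩) = Quot.mk (stepRel X Y) a := by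
  obtain ⟨k, φ⟩ := a
  refine (mk_cast (show 0 + k = k by omega) _).trans ?_
  refine congrArg (Quot.mk _) (congrArg (Sigma.mk k) (hom_ext fun n => ?_))
  simp only [preComp, comp_app, shMap_app, id_app, eqToHom_app_W, Category.assoc,
    Category.id_comp]
  erw [shMap_app, id_app, Category.id_comp]
  erw [eqToHom_objC Y.obj (show (n + k) + 0 = n + (0 + k) by omega),
      eqToHom_objC Y.obj (show n + (0 + k) = n + k by omega), ← Y.obj.map_comp]
  refine (comp_map_eq Y.obj _ (𝟙 (n + k))).trans ?_
  rw [Y.obj.map_id, Category.comp_id]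

lemma lmk_comp {X Y Z : WSeq W} (φ : X ⟶ Y) (ψ : Y ⟶ Z) :
    lmk (φ ≫ ψ) = Quot.mk (stepRel X Z) (preComp ⟨0, φ⟩ ⟨0, ψ⟩) := by
  refine congrArg (Quot.mk _) (?_ : (⟨0, φ ≫ ψ⟩ : Pre X Z) = preComp ⟨0, φ⟩ ⟨0, ψ⟩)
  show (⟨0, φ ≫ ψ⟩ : Pre X Z) = ⟨0 + 0, φ ≫ shMap 0 ψ⟩
  refine congrArg (Sigma.mk 0) (hom_ext fun n => ?_)
  simp only [comp_app, shMap_app, Category.assoc]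
  erw [comp_app, comp_app, shMap_app, eqToHom_refl, Category.comp_id]
  rfl

lemma vpow_zero (F : WSeq W) : vpow 0 F = 𝟙 F := by
  apply hom_ext; intro n
  rw [vpow_app, id_app]
  exact (congrArg F.obj.map (natHom_eq _ (𝟙 n))).trans (F.obj.map_id n)

lemma vpow_vstep (k : ℕ) (F : WSeq W) : vpow k F ≫ vstep k F = vpow (k + 1) F := by
  apply hom_ext; intro n
  rw [comp_app, vpow_app, vstep_app, vpow_app, ← F.obj.map_comp]
  exact congrArg F.obj.map (natHom_eq _ _)

lemma vpow_succ (k : ℕ) (F : WSeq W) :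
    vpow (k + 1) F = vpow 1 F ≫ (vpow k (shObj 1 F) : shObj 1 F ⟶ shObj (k + 1) F) := by
  apply hom_ext; intro n
  rw [comp_app, vpow_app, vpow_app, vpow_app, shObj_map, ← F.obj.map_comp]
  exact congrArg F.obj.map (natHom_eq _ _)

lemma shMap_vpow (k : ℕ) (X Y : WSeq W) (φ : X ⟶ shObj k Y) :
    Quot.mk (stepRel X (shObj k Y)) (preComp ⟨k, φ⟩ (⟨0, vpow k Y⟩ : Pre Y (shObj k Y))) =
      Quot.mk (stepRel X (shObj k Y)) ⟨0, φ⟩ := by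
  refine Eq.trans ?_ (mk_vadd (Z := shObj k Y) 0 k φ).symm
  refine congrArg (Quot.mk _) (congrArg (Sigma.mk (0 + k)) (hom_ext fun n => ?_))
  simp only [preComp, comp_app, shMap_app, vpow_app, vadd_app, Category.assoc]
  rw [
      eqToHom_objC Y.obj (show ((n + k) + 0) + k = (n + (0 + k)) + k by omega),
      ← Y.obj.map_comp]
  exact comp_map_eq Y.obj _ _

lemma inv_left {X : WSeq W} :
    Quot.mk (stepRel X X) (preComp (⟨0, vpow 1 X⟩ : Pre X (shObj 1 X)) ⟨1, 𝟙 (shObj 1 X)⟩) =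
      lmk (𝟙 X) := by
  refine Eq.trans ?_ (mk_vadd (Z := X) 0 1 (𝟙 X)).symm
  refine congrArg (Quot.mk _) (congrArg (Sigma.mk 1) (hom_ext fun n => ?_))
  simp only [preComp, comp_app, shMap_app, vpow_app, vadd_app, id_app, Category.id_comp,
    Category.assoc]
  erw [comp_app, id_app, Category.id_comp, vadd_app]
  rw [eqToHom_objC X.obj (show (n + 1) + 0 = n + (1 + 0) by omega), ← X.obj.map_comp]
  exact congrArg X.obj.map (natHom_eq _ _)

lemma inv_right {X : WSeq W} :
    Quot.mk (stepRel (shObj 1 X) (shObj 1 X))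
        (preComp (⟨1, 𝟙 (shObj 1 X)⟩ : Pre (shObj 1 X) X) (⟨0, vpow 1 X⟩ : Pre X (shObj 1 X))) =
      lmk (𝟙 (shObj 1 X)) := by
  refine Eq.trans ?_ (mk_vadd (Z := shObj 1 X) 0 1 (𝟙 (shObj 1 X))).symm
  refine congrArg (Quot.mk _) (congrArg (Sigma.mk 1) (hom_ext fun n => ?_))
  simp only [preComp, comp_app, shMap_app, vpow_app, vadd_app, id_app, Category.id_comp,
    Category.assoc]
  rw [
      eqToHom_objC X.obj (show ((n + 1) + 0) + 1 = (n + (0 + 1)) + 1 by omega),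
      ← X.obj.map_comp]
  exact congrArg X.obj.map (natHom_eq _ _)

theorem statement3 {C : Type u} [Category.{v} C] (W : MorphismProperty C) :
    ∃ comp : ∀ (X Y Z : WSeq W), SH X Y → SH Y Z → SH X Z,
      -- (i) the composition is well defined and satisfies the defining formula
      (∀ (X Y Z : WSeq W) (a : Pre X Y) (b : Pre Y Z),
        comp X Y Z (Quot.mk _ a) (Quot.mk _ b) = Quot.mk _ (preComp a b)) ∧
      -- associativity
      (∀ (X Y Z T : WSeq W) (f : SH X Y) (g : SH Y Z) (h : SH Z T),
        comp X Z T (comp X Y Z f g) h = comp X Y T f (comp Y Z T g h)) ∧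
      -- unitality, with units `ℓ_V(𝟙) = [0, 𝟙]`
      (∀ (X Y : WSeq W) (f : SH X Y), comp X X Y (lmk (𝟙 X)) f = f) ∧
      (∀ (X Y : WSeq W) (f : SH X Y), comp X Y Y f (lmk (𝟙 Y)) = f) ∧
      -- (ii) `ℓ_V` (identity on objects, `φ ↦ [0,φ]`) is functorial …
      (∀ (X Y Z : WSeq W) (φ : X ⟶ Y) (ψ : Y ⟶ Z),
        lmk (φ ≫ ψ) = comp X Y Z (lmk φ) (lmk ψ)) ∧
      -- … it inverts every morphism in `V = { v_C }` …
      (∀ X : WSeq W, ∃ w : SH (shObj 1 X) X,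
        comp X (shObj 1 X) X (lmk (vpow 1 X)) w = lmk (𝟙 X) ∧
        comp (shObj 1 X) X (shObj 1 X) w (lmk (vpow 1 X)) = lmk (𝟙 (shObj 1 X))) ∧
      -- … and it exhibits the shift category as the localization at `V`:
      -- for every category `D`, "functors" out of the shift category correspond, by
      -- precomposition with `ℓ_V`, to functors `Fun^W(ℕ,C) ⥤ D` inverting `V`.
      (∀ (D : Type u₂) (_ : Category.{v₂} D) (G : WSeq W ⥤ D),
        (∀ X : WSeq W, IsIso (G.map (vpow 1 X))) →
        ∃! Hmap : ∀ (X Y : WSeq W), SH X Y → (G.obj X ⟶ G.obj Y),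
          (∀ X : WSeq W, Hmap X X (lmk (𝟙 X)) = 𝟙 (G.obj X)) ∧
          (∀ (X Y Z : WSeq W) (f : SH X Y) (g : SH Y Z),
            Hmap X Z (comp X Y Z f g) = Hmap X Y f ≫ Hmap Y Z g) ∧
          (∀ (X Y : WSeq W) (φ : X ⟶ Y), Hmap X Y (lmk φ) = G.map φ)) := by
  refine ⟨fun X Y Z f g => compSH f g, fun X Y Z a b => rfl, ?_, ?_, ?_, ?_, ?_, ?_⟩
  · intro X Y Z T f g h
    induction f using Quot.ind with | _ a => ?_
    induction g using Quot.ind with | _ b => ?_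
    induction h using Quot.ind with | _ c => ?_
    exact assoc_pre a b c
  · intro X Y f
    induction f using Quot.ind with | _ b => ?_
    exact unit_left b
  · intro X Y f
    induction f using Quot.ind with | _ a => ?_
    exact unit_right a
  · intro X Y Z φ ψ
    exact lmk_comp φ ψ
  · intro X
    exact ⟨Quot.mk _ ⟨1, 𝟙 (shObj 1 X)⟩, inv_left, inv_right⟩
  · intro D instD G hG
    have hvk : ∀ (k : ℕ) (Y : WSeq W), IsIso (G.map (vpow k Y)) := by
      intro k
      induction k with
      | zero =>
          intro Y
          erw [vpow_zero, G.map_id]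
          exact IsIso.id (G.obj Y)
      | succ k ih =>
          intro Y
          rw [vpow_succ, G.map_comp]
          exact @IsIso.comp_isIso _ _ _ _ _ _ _ (hG Y) (ih (shObj 1 Y))
    have hwd : ∀ (X Y : WSeq W) (a b : Pre X Y), stepRel X Y a b →
        (G.map a.2 ≫ inv (G.map (vpow a.1 Y)) (I := hvk a.1 Y)) =
        (G.map b.2 ≫ inv (G.map (vpow b.1 Y)) (I := hvk b.1 Y)) := by
      intro X Y a b hab
      obtain ⟨k, φ⟩ := a
      rw [show b = _ from hab]
      letI := hvk k Y; letI := hvk (k + 1) Y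
      show G.map φ ≫ inv _ = G.map (φ ≫ vstep k Y) ≫ inv _
      rw [G.map_comp, Category.assoc]
      congr 1
      rw [IsIso.eq_comp_inv, IsIso.inv_comp_eq, ← G.map_comp, vpow_vstep]
    refine ⟨fun X Y => Quot.lift
      (fun a => G.map a.2 ≫ inv (G.map (vpow a.1 Y)) (I := hvk a.1 Y)) (hwd X Y),
      ⟨?_, ?_, ?_⟩, ?_⟩
    · intro X
      show G.map (𝟙 X) ≫ inv (G.map (vpow 0 X)) (I := hvk 0 X) = 𝟙 (G.obj X)
      letI := hvk 0 X
      erw [IsIso.comp_inv_eq, G.map_id, Category.id_comp, vpow_zero, G.map_id]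
    · intro X Y Z f g
      induction f using Quot.ind with | _ a => ?_
      induction g using Quot.ind with | _ b => ?_
      obtain ⟨k', φ'⟩ := a; obtain ⟨k, φ⟩ := b
      letI := hvk k' Y; letI := hvk k Z; letI := hvk (k + k') Z
      show G.map (φ' ≫ shMap k' φ) ≫ inv (G.map (vpow (k + k') Z)) =
        (G.map φ' ≫ inv (G.map (vpow k' Y))) ≫ (G.map φ ≫ inv (G.map (vpow k Z)))
      have e1 : G.map φ ≫ G.map (vadd k k' Z) =
          G.map (vpow k' Y) ≫ G.map (shMap k' φ) := by
        rw [← G.map_comp, ← G.map_comp, square_lemma]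
      have e2 : G.map (vpow k Z) ≫ G.map (vadd k k' Z) = G.map (vpow (k + k') Z) := by
        rw [← G.map_comp, vpow_vadd]
      have key : G.map (shMap k' φ) ≫ inv (G.map (vpow (k + k') Z)) =
          inv (G.map (vpow k' Y)) ≫ G.map φ ≫ inv (G.map (vpow k Z)) := by
        rw [IsIso.comp_inv_eq, Category.assoc, IsIso.eq_inv_comp, ← e1,
          Category.assoc]
        congr 1
        rw [IsIso.eq_inv_comp]
        exact e2
      rw [G.map_comp, Category.assoc, key, Category.assoc]
    · intro X Y φ
      show G.map φ ≫ inv (G.map (vpow 0 Y)) (I := hvk 0 Y) = G.map φ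
      letI := hvk 0 Y
      erw [IsIso.comp_inv_eq, vpow_zero, G.map_id, Category.comp_id]
    · intro H' hH'
      obtain ⟨h1, h2, h3⟩ := hH'
      funext X Y f
      induction f using Quot.ind with | _ a => ?_
      obtain ⟨k, φ⟩ := a
      have key : compSH (Quot.mk (stepRel X Y) ⟨k, φ⟩) (lmk (vpow k Y)) = lmk φ :=
        shMap_vpow k X Y φ
      have e := (h2 X Y (shObj k Y) (Quot.mk (stepRel X Y) ⟨k, φ⟩)
        (lmk (vpow k Y))).symm.trans (congrArg (H' X (shObj k Y)) key)
      rw [h3, h3] at e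
      letI := hvk k Y
      show H' X Y (Quot.mk (stepRel X Y) ⟨k, φ⟩) =
        G.map φ ≫ inv (G.map (vpow k Y)) (I := hvk k Y)
      rw [IsIso.eq_comp_inv]
      exact e

end ShiftCat
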